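/- Let G = (V,E) be a distributed computing network and s,t ∈ V. Suppose y assigns a value in {0,1} to every link (u,v) ∈ E and every node w ∈ V, and p assigns a real potential to every node of the layered graph of G, such that: p_v − p_u + y_{uv} ≥ 0 and p_{v'} − p_{u'} + y_{uv} ≥ 0 for every (u,v) ∈ E, p_{w'} − p_w + y_w ≥ 0 for every w ∈ V, and p_s − p_{t'} ≥ 1. Then the pair (E_c, V_c) with E_c = {(u,v) ∈ E : y_{uv} = 1} and V_c = {w ∈ V : y_w = 1} is a joint communication and computation cut for (s,t). -/

import Mathlib

open Finset

variable {V : Type} [Fintype V] [DecidableEq V]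

/-- A computation path from `s` to `t` in the directed graph with link set `E`:
a directed walk (a nonempty list of nodes whose consecutive pairs are links of `E`)
starting at `s` and ending at `t`, together with a designated processing node `proc`
lying on the walk. -/
structure CompPath (E : Finset (V × V)) (s t : V) : Type where
  walk : List V
  proc : V
  walk_ne : walk ≠ []
  head_eq : walk.head? = some s
  last_eq : walk.getLast? = some t
  chain : walk.Chain' fun u v => (u, v) ∈ E
  proc_mem : proc ∈ walk

namespace CompPath

/-- The list of links traversed by a computation path, with multiplicity. -/
def links {E : Finset (V × V)} {s t : V} (p : CompPath E s t) : List (V × V) :=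
  p.walk.zip p.walk.tail

end CompPath

/-- `x` is a feasible `s`–`t` flow in the computing network `(E, μE, μV)`:
a nonnegative, finitely supported assignment of values to computation paths such that
every link `e ∈ E` carries (with multiplicity) at most `μE e` total flow and every node
`w` processes at most `μV w` total flow. -/
def IsFlow (E : Finset (V × V)) (μE : V × V → ℝ) (μV : V → ℝ) (s t : V)
    (x : CompPath E s t →₀ ℝ) : Prop :=
  (∀ p, 0 ≤ x p) ∧
  (∀ e ∈ E, ∑ p ∈ x.support, x p * (p.links.count e : ℝ) ≤ μE e) ∧
  (∀ w : V, ∑ p ∈ x.support, (if p.proc = w then x p else 0) ≤ μV w)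

/-- The total value of a flow. -/
def flowValue (E : Finset (V × V)) (s t : V) (x : CompPath E s t →₀ ℝ) : ℝ :=
  ∑ p ∈ x.support, x p

/-- The maximum `s`–`t` flow of the computing network `(E, μE, μV)`. -/
noncomputable def maxFlow (E : Finset (V × V)) (μE : V × V → ℝ) (μV : V → ℝ)
    (s t : V) : ℝ :=
  sSup {F | ∃ x, IsFlow E μE μV s t x ∧ F = flowValue E s t x}

/-- A communication cut for `(s, t)`: a set of links `Ec ⊆ E` such that every
computation path from `s` to `t` whose processing node has positive processing
capacity uses some link of `Ec`. -/
def IsCommCut (E : Finset (V × V)) (μV : V → ℝ) (s t : V) (Ec : Finset (V × V)) : Prop :=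
  Ec ⊆ E ∧ ∀ p : CompPath E s t, 0 < μV p.proc → ∃ e ∈ Ec, e ∈ p.links

/-- A computation cut for `(s, t)`: a set of nodes `Vc` such that every computation
path from `s` to `t` whose processing node has positive processing capacity has its
processing node in `Vc`. -/
def IsCompCut (E : Finset (V × V)) (μV : V → ℝ) (s t : V) (Vc : Finset V) : Prop :=
  ∀ p : CompPath E s t, 0 < μV p.proc → p.proc ∈ Vc

/-- A joint communication and computation cut for `(s, t)`. -/
def IsJointCut (E : Finset (V × V)) (μV : V → ℝ) (s t : V)
    (Ec : Finset (V × V)) (Vc : Finset V) : Prop :=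
  Ec ⊆ E ∧
    ∀ p : CompPath E s t, 0 < μV p.proc → (∃ e ∈ Ec, e ∈ p.links) ∨ p.proc ∈ Vc

/-- The value of a joint cut. -/
def jointCutValue (μE : V × V → ℝ) (μV : V → ℝ) (Ec : Finset (V × V)) (Vc : Finset V) : ℝ :=
  ∑ e ∈ Ec, μE e + ∑ w ∈ Vc, μV w

/-- The minimum value of a joint communication and computation cut for `(s, t)`. -/
noncomputable def minJointCutValue (E : Finset (V × V)) (μE : V × V → ℝ) (μV : V → ℝ)
    (s t : V) : ℝ :=
  sInf {c | ∃ Ec Vc, IsJointCut E μV s t Ec Vc ∧ c = jointCutValue μE μV Ec Vc}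

/-- The edge set of the layered graph of `(V, E)`: a copy of each link in each of the
two layers (`Sum.inl` is the upper layer, `Sum.inr` the lower layer), plus a crossing
edge `(w, w')` for each node `w`. -/
def layerEdges (E : Finset (V × V)) : Finset ((V ⊕ V) × (V ⊕ V)) :=
  (E.image fun e => (Sum.inl e.1, Sum.inl e.2)) ∪
    (E.image fun e => (Sum.inr e.1, Sum.inr e.2)) ∪
    ((univ : Finset V).image fun w => (Sum.inl w, Sum.inr w))

/-- `a` is connected to `b` by a directed path in the layered graph after deleting
the edge set `C`. -/
def LConnected (E : Finset (V × V)) (C : Finset ((V ⊕ V) × (V ⊕ V))) (a b : V ⊕ V) : Prop :=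
  Relation.ReflTransGen (fun u v => (u, v) ∈ layerEdges E \ C) a b

/-- Costs (capacities) of layered-graph edges: each of the two copies of a link
`(u, v)` gets cost `μE (u, v)`, and the crossing edge `(w, w')` gets cost `κ w`. -/
def lcost (μE : V × V → ℝ) (κ : V → ℝ) : (V ⊕ V) × (V ⊕ V) → ℝ
  | (Sum.inl u, Sum.inl v) => μE (u, v)
  | (Sum.inr u, Sum.inr v) => μE (u, v)
  | (Sum.inl u, Sum.inr v) => if u = v then κ u else 0
  | (Sum.inr _, Sum.inl _) => 0

/-- Reachability along directed links of `E`. -/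
def Reach (E : Finset (V × V)) (a b : V) : Prop :=
  Relation.ReflTransGen (fun u v => (u, v) ∈ E) a b


lemma aux_head {α : Type*} (r : α → α → Prop) (hrefl : Reflexive r) (htrans : Transitive r) :
    ∀ L : List α, L.Chain' r → ∀ a, L.head? = some a → ∀ b ∈ L, r a b := by
  intro L
  induction L with
  | nil => intro _ a h; simp at h
  | cons x xs ih =>
    intro hc a ha b hb
    simp at ha; subst ha
    rcases List.mem_cons.1 hb with rfl | hb
    · exact hrefl b
    · cases xs with
      | nil => simp at hb
      | cons y ys =>
        rw [List.Chain', List.isChain_cons_cons] at hc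
        exact htrans hc.1 (ih hc.2 y rfl b hb)

lemma aux_last {α : Type*} (r : α → α → Prop) (hrefl : Reflexive r) (htrans : Transitive r)
    (L : List α) (hc : L.Chain' r) (a : α) (ha : L.getLast? = some a) :
    ∀ b ∈ L, r b a := by
  intro b hb
  have := aux_head (flip r) (fun x => hrefl x) (fun _ _ _ h1 h2 => htrans h2 h1) L.reverse
    (List.isChain_reverse.2 (by simpa [flip, List.Chain'] using hc)) a
    (by rwa [List.head?_reverse]) b (by simpa using hb)
  exact this

lemma aux_zip {α : Type*} (r : α → α → Prop) :
    ∀ L : List α, L.Chain' r → ∀ e ∈ L.zip L.tail, r e.1 e.2 := by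
  intro L
  induction L with
  | nil => simp
  | cons x xs ih =>
    intro hc e he
    cases xs with
    | nil => simp [List.zip] at he
    | cons y ys =>
      rw [List.Chain', List.isChain_cons_cons] at hc
      simp only [List.tail_cons, List.zip_cons_cons, List.mem_cons] at he
      rcases he with rfl | he
      · exact hc.1
      · exact ih hc.2 e he

lemma aux_chain_of_zip {α : Type*} (r : α → α → Prop) :
    ∀ L : List α, (∀ e ∈ L.zip L.tail, r e.1 e.2) → L.Chain' r := by
  intro L
  induction L with
  | nil => intro _; exact List.isChain_nil
  | cons x xs ih =>
    intro h
    cases xs with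
    | nil => exact List.isChain_singleton x
    | cons y ys =>
      rw [List.Chain', List.isChain_cons_cons]
      refine ⟨h (x, y) (by simp), ih ?_⟩
      intro e he
      exact h e (by simp only [List.tail_cons, List.zip_cons_cons, List.mem_cons]; right; simpa using he)

open scoped Classical in
/-- If `y` assigns values in `{0, 1}` to links and nodes and `p`
assigns real potentials to the nodes of the layered graph satisfying
`p v − p u + y (u,v) ≥ 0` and `p v' − p u' + y (u,v) ≥ 0` for every link `(u,v)`,
`p w' − p w + y w ≥ 0` for every node `w`, and `p s − p t' ≥ 1`, then
`({e ∈ E : y e = 1}, {w : y w = 1})` is a joint communication and computation cut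
for `(s, t)`. -/
theorem potentials_give_joint_cut (E : Finset (V × V)) (μE : V × V → ℝ) (μV : V → ℝ)
    (hμE : ∀ e, 0 ≤ μE e) (hμV : ∀ w, 0 ≤ μV w) (s t : V)
    (yE : V × V → ℝ) (yV : V → ℝ) (p : V ⊕ V → ℝ)
    (hyE : ∀ e ∈ E, yE e = 0 ∨ yE e = 1) (hyV : ∀ w : V, yV w = 0 ∨ yV w = 1)
    (h₁ : ∀ e ∈ E, p (Sum.inl e.2) - p (Sum.inl e.1) + yE e ≥ 0)
    (h₂ : ∀ e ∈ E, p (Sum.inr e.2) - p (Sum.inr e.1) + yE e ≥ 0)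
    (h₃ : ∀ w : V, p (Sum.inr w) - p (Sum.inl w) + yV w ≥ 0)
    (h₄ : p (Sum.inl s) - p (Sum.inr t) ≥ 1) :
    IsJointCut E μV s t (E.filter fun e => yE e = 1) (univ.filter fun w => yV w = 1) := by
  constructor
  · exact filter_subset _ _
  intro q hq
  by_contra hcon
  push_neg at hcon
  obtain ⟨hE, hVc⟩ := hcon
  have hyVproc : yV q.proc = 0 := by
    rcases hyV q.proc with h | h
    · exact h
    · exact absurd (mem_filter.2 ⟨mem_univ q.proc, h⟩) hVc
  have hEzero : ∀ e ∈ q.links, yE e = 0 := by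
    intro e he
    have heE : (e.1, e.2) ∈ E := aux_zip _ q.walk q.chain e he
    rcases hyE e (by simpa using heE) with h | h
    · exact h
    · exact absurd he (hE e (mem_filter.2 ⟨by simpa using heE, h⟩))
  set r : V → V → Prop := fun u v => p (Sum.inl u) ≤ p (Sum.inl v) ∧ p (Sum.inr u) ≤ p (Sum.inr v)
    with hr
  have hrefl : Reflexive r := fun x => ⟨le_refl _, le_refl _⟩
  have htrans : Transitive r := fun _ _ _ h1 h2 => ⟨h1.1.trans h2.1, h1.2.trans h2.2⟩
  have hchain : q.walk.Chain' r := by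
    apply aux_chain_of_zip
    intro e he
    have heE : (e.1, e.2) ∈ E := aux_zip _ q.walk q.chain e he
    have hz : yE e = 0 := hEzero e he
    have i1 := h₁ (e.1, e.2) heE
    have i2 := h₂ (e.1, e.2) heE
    constructor <;> simp only [hz] at i1 i2 ⊢ <;> [linarith [i1]; linarith [i2]]
  have h5 : r s q.proc := aux_head r hrefl htrans q.walk hchain s q.head_eq q.proc q.proc_mem
  have h6 : r q.proc t := aux_last r hrefl htrans q.walk hchain t q.last_eq q.proc q.proc_mem
  have h7 := h₃ q.proc
  rw [hyVproc] at h7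
  have := h5.1
  have := h6.2
  linarith
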